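/- For every n ≥ 1, the number of league outcomes with n teams in which every team has total points exactly 3(n−1) equals the number of loopless digraphs on Fin n in which every vertex has its in-degree equal to its out-degree (labeled Eulerian digraphs on n nodes). -/

import Mathlib

open Finset

inductive MatchResult : Type
  | homeWin : MatchResult
  | draw : MatchResult
  | awayWin : MatchResult
  deriving DecidableEq

instance : Fintype MatchResult :=
  ⟨{MatchResult.homeWin, MatchResult.draw, MatchResult.awayWin}, fun x => by cases x <;> decide⟩

/-- A league outcome: a result for each ordered pair of distinct teams
(the first component is the home team). -/
abbrev LeagueOutcome (n : ℕ) : Type :=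
  {p : Fin n × Fin n // p.1 ≠ p.2} → MatchResult

/-- Points earned by the home team. -/
def homePts : MatchResult → ℕ
  | .homeWin => 3
  | .draw => 1
  | .awayWin => 0

/-- Points earned by the away team. -/
def awayPts : MatchResult → ℕ
  | .homeWin => 0
  | .draw => 1
  | .awayWin => 3

/-- Total points of team `i`: sum over all matches of the points `i` earns in them. -/
def totalPoints {n : ℕ} (r : LeagueOutcome n) (i : Fin n) : ℕ :=
  ∑ m : {p : Fin n × Fin n // p.1 ≠ p.2},
    ((if m.val.1 = i then homePts (r m) else 0) +
     (if m.val.2 = i then awayPts (r m) else 0))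

/-- Total points the other teams earn in their matches against team `i`. -/
def oppPoints {n : ℕ} (r : LeagueOutcome n) (i : Fin n) : ℕ :=
  ∑ m : {p : Fin n × Fin n // p.1 ≠ p.2},
    ((if m.val.1 = i then awayPts (r m) else 0) +
     (if m.val.2 = i then homePts (r m) else 0))

/-- Number of matches that team `i` wins. -/
def wins {n : ℕ} (r : LeagueOutcome n) (i : Fin n) : ℕ :=
  (Finset.univ.filter (fun m : {p : Fin n × Fin n // p.1 ≠ p.2} =>
    (m.val.1 = i ∧ r m = .homeWin) ∨ (m.val.2 = i ∧ r m = .awayWin))).card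

/-- Number of matches that team `i` draws. -/
def draws {n : ℕ} (r : LeagueOutcome n) (i : Fin n) : ℕ :=
  (Finset.univ.filter (fun m : {p : Fin n × Fin n // p.1 ≠ p.2} =>
    (m.val.1 = i ∨ m.val.2 = i) ∧ r m = .draw)).card

/-- Number of matches that team `i` loses. -/
def losses {n : ℕ} (r : LeagueOutcome n) (i : Fin n) : ℕ :=
  (Finset.univ.filter (fun m : {p : Fin n × Fin n // p.1 ≠ p.2} =>
    (m.val.1 = i ∧ r m = .awayWin) ∨ (m.val.2 = i ∧ r m = .homeWin))).card

section Aux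

variable {n : ℕ}

abbrev MatchIdx (n : ℕ) := {p : Fin n × Fin n // p.1 ≠ p.2}

def NoDraw (r : LeagueOutcome n) : Prop := ∀ m, r m ≠ MatchResult.draw

lemma sum_totalPoints (r : LeagueOutcome n) :
    ∑ i, totalPoints r i = ∑ m : MatchIdx n, (homePts (r m) + awayPts (r m)) := by
  unfold totalPoints
  rw [Finset.sum_comm]
  refine Finset.sum_congr rfl fun m _ => ?_
  rw [Finset.sum_add_distrib]
  simp [Finset.sum_ite_eq]

lemma card_matchIdx : Fintype.card (MatchIdx n) = n * n - n := by
  rw [Fintype.card_subtype]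
  have h : (univ.filter fun p : Fin n × Fin n => p.1 ≠ p.2) = univ.offDiag := by
    ext p; simp [Finset.mem_offDiag]
  rw [h, Finset.offDiag_card]
  simp

lemma noDraw_of_max (hn : 1 ≤ n) (r : LeagueOutcome n)
    (h : ∀ i, totalPoints r i = 3 * (n - 1)) : NoDraw r := by
  intro m hm
  have hsum : ∑ i, totalPoints r i = n * (3 * (n - 1)) := by
    simp [h, Finset.sum_const, Finset.card_univ, mul_comm]
  have hlt : ∑ m : MatchIdx n, (homePts (r m) + awayPts (r m)) <
      ∑ _m : MatchIdx n, 3 := by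
    apply Finset.sum_lt_sum
    · intro x _; cases hx : r x <;> simp [homePts, awayPts, hx]
    · exact ⟨m, Finset.mem_univ m, by rw [hm]; simp [homePts, awayPts]⟩
  rw [← sum_totalPoints, hsum, Finset.sum_const, Finset.card_univ, card_matchIdx,
    smul_eq_mul] at hlt
  obtain ⟨k, rfl⟩ := Nat.exists_eq_add_of_le hn
  have h1 : (1 + k) * (1 + k) - (1 + k) = (1 + k) * k := by
    have : (1 + k) * k + (1 + k) = (1 + k) * (1 + k) := by ring
    omega
  rw [h1] at hlt
  have h2 : (1 + k) * (3 * (1 + k - 1)) = (1 + k) * k * 3 := by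
    have : 1 + k - 1 = k := by omega
    rw [this]; ring
  omega

lemma sum_ite_card {α : Type*} [Fintype α] (P : α → Prop) [DecidablePred P] (c : ℕ) :
    ∑ x, (if P x then c else 0) = c * (univ.filter P).card := by
  simp [Finset.sum_ite, mul_comm]

lemma totalPoints_eq (r : LeagueOutcome n) (hr : NoDraw r) (i : Fin n) :
    totalPoints r i =
      3 * ((univ.filter fun m : MatchIdx n => m.val.1 = i ∧ r m = .homeWin).card
        + (univ.filter fun m : MatchIdx n => m.val.2 = i ∧ r m = .awayWin).card) := by
  unfold totalPoints
  rw [Finset.sum_add_distrib]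
  have h1 : ∑ m : MatchIdx n, (if m.val.1 = i then homePts (r m) else 0)
      = ∑ m : MatchIdx n, (if m.val.1 = i ∧ r m = .homeWin then 3 else 0) := by
    refine Finset.sum_congr rfl fun m _ => ?_
    have := hr m
    by_cases h : m.val.1 = i <;> cases hm : r m <;> simp_all [homePts]
  have h2 : ∑ m : MatchIdx n, (if m.val.2 = i then awayPts (r m) else 0)
      = ∑ m : MatchIdx n, (if m.val.2 = i ∧ r m = .awayWin then 3 else 0) := by
    refine Finset.sum_congr rfl fun m _ => ?_
    have := hr m
    by_cases h : m.val.2 = i <;> cases hm : r m <;> simp_all [awayPts]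
  rw [h1, h2, sum_ite_card, sum_ite_card]
  ring

lemma homeMatches_card (i : Fin n) :
    (univ.filter fun m : MatchIdx n => m.val.1 = i).card = n - 1 := by
  have : (univ.filter fun m : MatchIdx n => m.val.1 = i).card
      = (univ.filter fun j : Fin n => j ≠ i).card := by
    refine Finset.card_bij (fun m _ => m.val.2) ?_ ?_ ?_
    · intro m hm
      simp only [Finset.mem_filter, Finset.mem_univ, true_and] at hm ⊢
      rw [← hm]; exact fun h => m.prop h.symm
    · intro m1 h1 m2 h2 h
      simp only [Finset.mem_filter, Finset.mem_univ, true_and] at h1 h2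
      exact Subtype.ext (Prod.ext (h1.trans h2.symm) h)
    · intro j hj
      simp only [Finset.mem_filter, Finset.mem_univ, true_and] at hj
      exact ⟨⟨(i, j), fun h => hj h.symm⟩, by simp, rfl⟩
  rw [this, Finset.filter_ne', Finset.card_erase_of_mem (Finset.mem_univ i),
    Finset.card_univ, Fintype.card_fin]

end Aux

section Aux2

variable {n : ℕ}

/-- digraph of an outcome: arc `i → j` iff `i` beat `j` away (i.e. match `(j,i)` was an away win) -/
def outG (r : LeagueOutcome n) : Fin n → Fin n → Bool :=
  fun i j => if h : j ≠ i then decide (r ⟨(j, i), h⟩ = MatchResult.awayWin) else false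

def outR (g : Fin n → Fin n → Bool) : LeagueOutcome n :=
  fun m => if g m.val.2 m.val.1 then MatchResult.awayWin else MatchResult.homeWin

lemma outG_outR (g : Fin n → Fin n → Bool) (hg : ∀ i, g i i = false) :
    outG (outR g) = g := by
  funext i j
  by_cases h : j ≠ i
  · simp only [outG, outR, dif_pos h]
    rcases Bool.eq_false_or_eq_true (g i j) with h' | h' <;> simp [h']
  · push_neg at h
    subst h
    simp [outG, hg]

lemma outR_outG (r : LeagueOutcome n) (hr : NoDraw r) : outR (outG r) = r := by
  funext m
  have hne : m.val.1 ≠ m.val.2 := m.prop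
  have hm : (⟨(m.val.1, m.val.2), hne⟩ : MatchIdx n) = m := by
    apply Subtype.ext; simp
  simp only [outR, outG, dif_pos hne, hm]
  have := hr m
  cases h : r m <;> simp_all

lemma outG_loopless (r : LeagueOutcome n) (i : Fin n) : outG r i i = false := by
  simp [outG]

lemma indeg_eq (r : LeagueOutcome n) (A : Fin n) :
    (univ.filter fun j => outG r j A = true).card =
      (univ.filter fun m : MatchIdx n => m.val.1 = A ∧ r m = .awayWin).card := by
  refine Finset.card_bij (fun j hj => (⟨(A, j), by
      simp only [Finset.mem_filter, Finset.mem_univ, true_and] at hj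
      simp only [outG] at hj
      intro h
      rw [dif_neg (not_not_intro h)] at hj
      exact Bool.false_ne_true hj⟩ : MatchIdx n)) ?_ ?_ ?_
  · intro j hj
    simp only [Finset.mem_filter, Finset.mem_univ, true_and] at hj
    simp only [outG] at hj
    by_cases h : A ≠ j
    · rw [dif_pos h] at hj
      exact Finset.mem_filter.mpr ⟨Finset.mem_univ _, rfl, of_decide_eq_true hj⟩
    · rw [dif_neg h] at hj
      exact absurd hj Bool.false_ne_true
  · intro j1 h1 j2 h2 h
    simpa using congrArg (fun m : MatchIdx n => m.val.2) h
  · intro m hm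
    simp only [Finset.mem_filter, Finset.mem_univ, true_and] at hm
    obtain ⟨h1, h2⟩ := hm
    refine ⟨m.val.2, ?_, ?_⟩
    · simp only [Finset.mem_filter, Finset.mem_univ, true_and]
      simp only [outG]
      have hAne : A ≠ m.val.2 := h1 ▸ m.prop
      rw [dif_pos hAne]
      have : (⟨(A, m.val.2), hAne⟩ : MatchIdx n) = m := by
        apply Subtype.ext
        exact Prod.ext h1.symm rfl
      rw [this]
      simpa using h2
    · apply Subtype.ext
      exact Prod.ext h1.symm rfl

lemma outdeg_eq (r : LeagueOutcome n) (A : Fin n) :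
    (univ.filter fun j => outG r A j = true).card =
      (univ.filter fun m : MatchIdx n => m.val.2 = A ∧ r m = .awayWin).card := by
  refine Finset.card_bij (fun j hj => (⟨(j, A), by
      simp only [Finset.mem_filter, Finset.mem_univ, true_and] at hj
      simp only [outG] at hj
      intro h
      rw [dif_neg (not_not_intro h)] at hj
      exact Bool.false_ne_true hj⟩ : MatchIdx n)) ?_ ?_ ?_
  · intro j hj
    simp only [Finset.mem_filter, Finset.mem_univ, true_and] at hj
    simp only [outG] at hj
    by_cases h : j ≠ A
    · rw [dif_pos h] at hj
      exact Finset.mem_filter.mpr ⟨Finset.mem_univ _, rfl, of_decide_eq_true hj⟩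
    · rw [dif_neg h] at hj
      exact absurd hj Bool.false_ne_true
  · intro j1 h1 j2 h2 h
    simpa using congrArg (fun m : MatchIdx n => m.val.1) h
  · intro m hm
    simp only [Finset.mem_filter, Finset.mem_univ, true_and] at hm
    obtain ⟨h1, h2⟩ := hm
    refine ⟨m.val.1, ?_, ?_⟩
    · simp only [Finset.mem_filter, Finset.mem_univ, true_and]
      simp only [outG]
      have hne : m.val.1 ≠ A := fun h => m.prop (h.trans h1.symm)
      rw [dif_pos hne]
      have : (⟨(m.val.1, A), hne⟩ : MatchIdx n) = m := by
        apply Subtype.ext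
        exact Prod.ext rfl h1.symm
      rw [this]
      simpa using h2
    · apply Subtype.ext
      exact Prod.ext rfl h1.symm

lemma HW_add_HL (r : LeagueOutcome n) (hr : NoDraw r) (i : Fin n) :
    (univ.filter fun m : MatchIdx n => m.val.1 = i ∧ r m = .homeWin).card
      + (univ.filter fun m : MatchIdx n => m.val.1 = i ∧ r m = .awayWin).card
      = n - 1 := by
  rw [← homeMatches_card (n := n) i]
  rw [← Finset.card_filter_add_card_filter_not
    (s := univ.filter fun m : MatchIdx n => m.val.1 = i)
    (p := fun m => r m = MatchResult.homeWin)]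
  congr 1
  · rw [Finset.filter_filter]
  · rw [Finset.filter_filter]
    congr 1
    apply Finset.filter_congr
    intro m _
    have := hr m
    cases h : r m <;> simp_all

lemma main_iff (r : LeagueOutcome n) (hr : NoDraw r) :
    (∀ i, totalPoints r i = 3 * (n - 1)) ↔
    (∀ A : Fin n, (univ.filter fun j => outG r j A = true).card =
        (univ.filter fun j => outG r A j = true).card) := by
  refine forall_congr' fun i => ?_
  rw [totalPoints_eq r hr i, indeg_eq r i, outdeg_eq r i]
  have h := HW_add_HL r hr i
  omega

end Aux2

/-- the number of outcomes in which every team has exactly `3(n−1)`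
points equals the number of labeled Eulerian loopless digraphs on `Fin n`. -/
theorem card_max_score_eq_card_eulerian (n : ℕ) (hn : 1 ≤ n) :
    Fintype.card {r : LeagueOutcome n // ∀ i, totalPoints r i = 3 * (n - 1)} =
      Fintype.card {g : Fin n → Fin n → Bool //
        (∀ i, g i i = false) ∧
        ∀ A : Fin n,
          (Finset.univ.filter (fun j => g j A = true)).card =
            (Finset.univ.filter (fun j => g A j = true)).card} := by
  apply Fintype.card_congr
  refine ⟨fun r => ⟨outG r.val, fun i => outG_loopless r.val i,
      (main_iff r.val (noDraw_of_max hn r.val r.prop)).mp r.prop⟩,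
    fun g => ⟨outR g.val, ?_⟩, ?_, ?_⟩
  · have hnd : NoDraw (outR g.val) := by
      intro m
      unfold outR
      by_cases h : g.val m.val.2 m.val.1 = true <;> simp [h]
    refine (main_iff (outR g.val) hnd).mpr ?_
    rw [outG_outR g.val g.prop.1]
    exact g.prop.2
  · intro r
    exact Subtype.ext (outR_outG r.val (noDraw_of_max hn r.val r.prop))
  · intro g
    exact Subtype.ext (outG_outR g.val g.prop.1)
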